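/- Let g be a stratified Lie algebra, W a horizontal half-space of g, and h a subalgebra of g containing ∂W. Then the following are equivalent: (1) there exists X ∈ V_1 \ ∂W such that ad_X^k(Y) ∈ h for all Y ∈ ∂W and all k ≥ 1; (2) [g,g] ⊆ h. -/
import Mathlib


/-- The span of all brackets `⁅x, y⁆` with `x ∈ A` and `y ∈ B`. -/
def lieSpan {L : Type} [LieRing L] [LieAlgebra ℝ L] (A B : Submodule ℝ L) :
    Submodule ℝ L :=
  Submodule.span ℝ {z : L | ∃ x ∈ A, ∃ y ∈ B, z = ⁅x, y⁆}

/-- A stratification of step `s` on a Lie algebra `L`: a decomposition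
`L = V 1 ⊕ ⋯ ⊕ V s` (the direct sum being recorded by spanning and independence)
with `[V 1, V j] = V (j+1)` for `1 ≤ j < s`, `[V 1, V s] = 0` and `V s ≠ 0`.
Layers of index `0` or `> s` are trivial. -/
structure IsStratified (L : Type) [LieRing L] [LieAlgebra ℝ L]
    (s : ℕ) (V : ℕ → Submodule ℝ L) : Prop where
  pos : 0 < s
  last_ne_bot : V s ≠ ⊥
  zero_bot : V 0 = ⊥
  gt_bot : ∀ j, s < j → V j = ⊥
  iSup_eq_top : (⨆ j, V j) = ⊤
  indep : ∀ j, Disjoint (V j) (⨆ k, ⨆ _ : k ≠ j, V k)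
  layer : ∀ j, 1 ≤ j → j < s → lieSpan (V 1) (V j) = V (j + 1)
  last : lieSpan (V 1) (V s) = ⊥

/-- Let `g` be a stratified Lie algebra, `W = {v ∈ V₁ : lam v ≥ 0}` a horizontal
half-space (given by a linear functional `lam` that is nonzero on `V₁`, with boundary
`∂W = {v ∈ V₁ : lam v = 0}`), and `h` a Lie subalgebra of `g` containing `∂W`. Then the
following are equivalent: (1) there exists `X ∈ V₁ \ ∂W` such that `ad_X^k Y ∈ h` for
all `Y ∈ ∂W` and all `k ≥ 1`; (2) `[g,g] ⊆ h`. -/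
theorem halfspace_boundary_subalgebra_iff_contains_commutator
    (L : Type) [LieRing L] [LieAlgebra ℝ L]
    (s : ℕ) (V : ℕ → Submodule ℝ L) (hst : IsStratified L s V)
    (lam : L →ₗ[ℝ] ℝ) (hlam : ∃ v ∈ V 1, lam v ≠ 0)
    (h : LieSubalgebra ℝ L)
    (hbd : ∀ v ∈ V 1, lam v = 0 → v ∈ h) :
    (∃ X ∈ V 1, lam X ≠ 0 ∧
        ∀ Y ∈ V 1, lam Y = 0 → ∀ k : ℕ, 1 ≤ k → ((LieAlgebra.ad ℝ L X) ^ k) Y ∈ h) ↔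
      (∀ z ∈ ⁅(⊤ : LieIdeal ℝ L), (⊤ : LieIdeal ℝ L)⁆, z ∈ h) := by
  constructor
  · rintro ⟨X, hXV, hXlam, hX⟩ z hz
    -- The submodule of elements all of whose iterated `ad X` images lie in `h`.
    set M : Submodule ℝ L :=
      { carrier := {v | ∀ k : ℕ, ((LieAlgebra.ad ℝ L X) ^ k) v ∈ h}
        add_mem' := fun hv hw k => by
          rw [map_add]; exact h.add_mem (hv k) (hw k)
        zero_mem' := fun k => by rw [map_zero]; exact h.zero_mem
        smul_mem' := fun c v hv k => by
          rw [map_smul]; exact h.smul_mem c (hv k) } with hM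
    have hMmem : ∀ v : L, v ∈ M ↔ ∀ k : ℕ, ((LieAlgebra.ad ℝ L X) ^ k) v ∈ h :=
      fun v => Iff.rfl
    have hAsucc : ∀ (k : ℕ) (v : L),
        ((LieAlgebra.ad ℝ L X) ^ (k + 1)) v = ((LieAlgebra.ad ℝ L X) ^ k) ⁅X, v⁆ := by
      intro k v
      rw [pow_succ, Module.End.mul_apply, LieAlgebra.ad_apply]
    -- `M` is closed under `ad X`.
    have hXM : ∀ v ∈ M, ⁅X, v⁆ ∈ M := by
      intro v hv k
      have := (hMmem v).mp hv (k + 1)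
      rwa [hAsucc] at this
    -- `M` is closed under brackets (Leibniz rule, via induction).
    have hbr : ∀ k : ℕ, ∀ v w : L, v ∈ M → w ∈ M →
        ((LieAlgebra.ad ℝ L X) ^ k) ⁅v, w⁆ ∈ h := by
      intro k
      induction k with
      | zero =>
        intro v w hv hw
        have hv0 : v ∈ h := by simpa using (hMmem v).mp hv 0
        have hw0 : w ∈ h := by simpa using (hMmem w).mp hw 0
        simpa using h.lie_mem hv0 hw0
      | succ n ih =>
        intro v w hv hw
        rw [hAsucc, leibniz_lie, map_add]
        exact h.add_mem (ih _ _ (hXM v hv) hw) (ih _ _ hv (hXM w hw))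
    have hMbr : ∀ v ∈ M, ∀ w ∈ M, ⁅v, w⁆ ∈ M := fun v hv w hw k => hbr k v w hv hw
    have hMh : ∀ v ∈ M, v ∈ h := by
      intro v hv
      have := (hMmem v).mp hv 0
      simpa using this
    -- The boundary `∂W` is contained in `M`.
    have hbdM : ∀ v ∈ V 1, lam v = 0 → v ∈ M := by
      intro v hv hlv k
      cases k with
      | zero => simpa using hbd v hv hlv
      | succ n => exact hX v hv hlv (n + 1) (Nat.succ_le_succ (Nat.zero_le n))
    -- The submodule `N = M + ℝ∙X` is closed under brackets (landing in `M`).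
    set N : Submodule ℝ L := M ⊔ (ℝ ∙ X) with hN
    have hmemN : ∀ v ∈ N, ∃ m ∈ M, ∃ c : ℝ, v = m + c • X := by
      intro v hv
      rcases Submodule.mem_sup.mp hv with ⟨m, hm, x, hx, rfl⟩
      rcases Submodule.mem_span_singleton.mp hx with ⟨c, rfl⟩
      exact ⟨m, hm, c, rfl⟩
    have hNbrM : ∀ v ∈ N, ∀ w ∈ N, ⁅v, w⁆ ∈ M := by
      intro v hv w hw
      rcases hmemN v hv with ⟨m, hm, c, rfl⟩
      rcases hmemN w hw with ⟨m', hm', c', rfl⟩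
      have key : ⁅m + c • X, m' + c' • X⁆
          = ⁅m, m'⁆ + c' • ⁅m, X⁆ + c • ⁅X, m'⁆ + (c' * c) • ⁅X, X⁆ := by
        simp only [lie_add, add_lie, smul_lie, lie_smul, smul_smul, smul_add]
        abel
      have h1 : ⁅m, X⁆ ∈ M := by
        have := M.neg_mem (hXM m hm)
        rwa [lie_skew] at this
      rw [key, lie_self X, smul_zero, add_zero]
      exact M.add_mem (M.add_mem (hMbr m hm m' hm') (M.smul_mem _ h1))
        (M.smul_mem _ (hXM m' hm'))
    -- `V 1 ≤ N`.
    have hV1N : V 1 ≤ N := by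
      intro v hv
      have hvX : v - (lam v / lam X) • X ∈ M := by
        apply hbdM
        · exact (V 1).sub_mem hv ((V 1).smul_mem _ hXV)
        · have : lam (v - (lam v / lam X) • X) = lam v - (lam v / lam X) * lam X := by
            rw [map_sub, map_smul]; rfl
          rw [this, div_mul_cancel₀ _ hXlam, sub_self]
      have hv' : v = (v - (lam v / lam X) • X) + (lam v / lam X) • X := by abel
      rw [hv']
      exact Submodule.add_mem _ (Submodule.mem_sup_left hvX)
        (Submodule.mem_sup_right (Submodule.smul_mem _ _ (Submodule.mem_span_singleton_self X)))
    -- By induction, every layer is contained in `N`, hence `N = ⊤`.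
    have hVN : ∀ j : ℕ, V j ≤ N := by
      intro j
      induction j with
      | zero => rw [hst.zero_bot]; exact bot_le
      | succ n ih =>
        rcases Nat.eq_zero_or_pos n with rfl | hn
        · exact hV1N
        rcases lt_or_ge n s with hns | hns
        · rw [← hst.layer n hn hns, lieSpan, Submodule.span_le]
          rintro z ⟨x, hx, y, hy, rfl⟩
          exact Submodule.mem_sup_left (hNbrM x (hV1N hx) y (ih hy))
        · rw [hst.gt_bot (n + 1) (Nat.lt_succ_of_le hns)]; exact bot_le
    have hNtop : N = ⊤ := by
      rw [← top_le_iff, ← hst.iSup_eq_top]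
      exact iSup_le hVN
    -- Every bracket lies in `M ≤ h`, hence `z ∈ h`.
    have hallbr : ∀ a b : L, ⁅a, b⁆ ∈ h.toSubmodule := by
      intro a b
      exact hMh _ (hNbrM a (hNtop ▸ Submodule.mem_top) b (hNtop ▸ Submodule.mem_top))
    have hz' : z ∈ (⁅(⊤ : LieIdeal ℝ L), (⊤ : LieIdeal ℝ L)⁆ :
        LieSubmodule ℝ L L).toSubmodule := (LieSubmodule.mem_toSubmodule _).mpr hz
    rw [LieSubmodule.lieIdeal_oper_eq_linear_span] at hz'
    have hle : Submodule.span ℝ {m : L | ∃ (x : (⊤ : LieIdeal ℝ L)) (n : (⊤ : LieIdeal ℝ L)),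
        ⁅(x : L), (n : L)⁆ = m} ≤ h.toSubmodule := by
      rw [Submodule.span_le]
      rintro m ⟨x, n, rfl⟩
      exact hallbr x n
    exact hle hz'
  · rintro hcomm
    rcases hlam with ⟨v, hvV, hvlam⟩
    refine ⟨v, hvV, hvlam, fun Y _ _ k hk => ?_⟩
    obtain ⟨n, rfl⟩ := Nat.exists_eq_add_of_le hk
    rw [add_comm, pow_succ', Module.End.mul_apply, LieAlgebra.ad_apply]
    exact hcomm _ (LieSubmodule.lie_mem_lie (LieSubmodule.mem_top _) (LieSubmodule.mem_top _))
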